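/- arXiv:2207.04990 — 2 statements merged into one kernel-verified Lean document; each statement's English description precedes it below -/
import Mathlib

section
/- Let n ≥ 3. Then in LCTR, SG((n³)) = SG((3ⁿ)) = 0 if n is odd, and SG((n³)) = SG((3ⁿ)) = 1 if n is even, where (n³) denotes the partition with three parts equal to n and (3ⁿ) the partition with n parts equal to 3. -/
/-- Remove the left column of a Young diagram: subtract 1 from each part and
omit nonpositive values. -/
def leftCol (l : List ℕ) : List ℕ := (l.map (· - 1)).filter (0 < ·)

/-- Remove the top row of a Young diagram. -/
def topRow (l : List ℕ) : List ℕ := l.tail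

/-- Minimum excluded value of a set of naturals. -/
noncomputable def mex (s : Set ℕ) : ℕ := sInf {n | n ∉ s}

def wt (l : List ℕ) : ℕ := l.sum + l.length

lemma wt_leftCol_le (l : List ℕ) : wt (leftCol l) ≤ l.sum := by
  induction l with
  | nil => simp [leftCol, wt]
  | cons a t ih =>
    simp only [leftCol, wt] at ih ⊢
    rw [List.map_cons, List.filter_cons]
    by_cases h : 0 < a - 1
    · simp only [h, decide_true, if_true, List.sum_cons, List.length_cons]
      omega
    · simp only [h, decide_false, Bool.false_eq_true, if_false, List.sum_cons]
      omega

lemma wt_leftCol_lt (l : List ℕ) (h : l ≠ []) : wt (leftCol l) < wt l := by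
  have h1 := wt_leftCol_le l
  have h2 : 0 < l.length := List.length_pos_iff.mpr h
  unfold wt at *
  omega

lemma wt_topRow_lt (l : List ℕ) (h : l ≠ []) : wt (topRow l) < wt l := by
  cases l with
  | nil => exact absurd rfl h
  | cons a t => simp [topRow, wt]; omega

/-- The Sprague–Grundy value of a position in the LCTR game. -/
noncomputable def SG (l : List ℕ) : ℕ :=
  if h : l = [] then 0
  else mex {SG (leftCol l), SG (topRow l)}
termination_by wt l
decreasing_by
  · exact wt_leftCol_lt l h
  · exact wt_topRow_lt l h


lemma SG_nil : SG [] = 0 := by simp [SG]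

lemma SG_ne_nil {l : List ℕ} (h : l ≠ []) :
    SG l = mex {SG (leftCol l), SG (topRow l)} := by
  conv_lhs => rw [SG]
  rw [dif_neg h]

lemma mex_pair {a b n : ℕ} (h1 : n ∉ ({a, b} : Set ℕ))
    (h3 : ∀ m < n, m ∈ ({a, b} : Set ℕ)) : mex {a, b} = n := by
  unfold mex
  have hne : {m | m ∉ ({a, b} : Set ℕ)}.Nonempty := ⟨n, h1⟩
  have hle := Nat.sInf_le (show n ∈ {m | m ∉ ({a, b} : Set ℕ)} from h1)
  have hmem := Nat.sInf_mem hne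
  rcases lt_or_eq_of_le hle with h | h
  · exact absurd (h3 _ h) hmem
  · exact h

lemma mex_single {a n : ℕ} (h1 : n ∉ ({a} : Set ℕ))
    (h3 : ∀ m < n, m ∈ ({a} : Set ℕ)) : mex {a} = n := by
  unfold mex
  have hne : {m | m ∉ ({a} : Set ℕ)}.Nonempty := ⟨n, h1⟩
  have hle := Nat.sInf_le (show n ∈ {m | m ∉ ({a} : Set ℕ)} from h1)
  have hmem := Nat.sInf_mem hne
  rcases lt_or_eq_of_le hle with h | h
  · exact absurd (h3 _ h) hmem
  · exact h

lemma mexs0 : mex {(0:ℕ)} = 1 := by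
  apply mex_single <;> simp only [Set.mem_singleton_iff]
  · omega
  · intro m hm; omega
lemma mexs2 : mex {(2:ℕ)} = 0 := by
  apply mex_single <;> simp only [Set.mem_singleton_iff]
  · omega
  · intro m hm; omega

lemma mex00 : mex {(0:ℕ), 0} = 1 := by
  apply mex_pair <;> simp only [Set.mem_insert_iff, Set.mem_singleton_iff]
  · omega
  · intro m hm; omega
lemma mex01 : mex {(0:ℕ), 1} = 2 := by
  apply mex_pair <;> simp only [Set.mem_insert_iff, Set.mem_singleton_iff]
  · omega
  · intro m hm; omega
lemma mex10 : mex {(1:ℕ), 0} = 2 := by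
  apply mex_pair <;> simp only [Set.mem_insert_iff, Set.mem_singleton_iff]
  · omega
  · intro m hm; omega
lemma mex02 : mex {(0:ℕ), 2} = 1 := by
  apply mex_pair <;> simp only [Set.mem_insert_iff, Set.mem_singleton_iff]
  · omega
  · intro m hm; omega
lemma mex20 : mex {(2:ℕ), 0} = 1 := by
  apply mex_pair <;> simp only [Set.mem_insert_iff, Set.mem_singleton_iff]
  · omega
  · intro m hm; omega
lemma mex22 : mex {(2:ℕ), 2} = 0 := by
  apply mex_pair <;> simp only [Set.mem_insert_iff, Set.mem_singleton_iff]
  · omega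
  · intro m hm; omega
lemma mex12 : mex {(1:ℕ), 2} = 0 := by
  apply mex_pair <;> simp only [Set.mem_insert_iff, Set.mem_singleton_iff]
  · omega
  · intro m hm; omega
lemma mex21 : mex {(2:ℕ), 1} = 0 := by
  apply mex_pair <;> simp only [Set.mem_insert_iff, Set.mem_singleton_iff]
  · omega
  · intro m hm; omega

lemma leftCol_rep2 (k v : ℕ) :
    leftCol (List.replicate k (v + 2)) = List.replicate k (v + 1) := by
  simp [leftCol, List.filter_replicate]
lemma leftCol_rep1 (k : ℕ) : leftCol (List.replicate k 1) = [] := by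
  simp [leftCol, List.filter_replicate]
lemma leftCol_rep0 (k : ℕ) : leftCol (List.replicate k 0) = [] := by
  simp [leftCol, List.filter_replicate]
lemma topRow_rep (k v : ℕ) :
    topRow (List.replicate (k + 1) v) = List.replicate k v := by
  simp [topRow]

lemma col1 (n : ℕ) :
    SG (List.replicate n 1) = if n = 0 then 0 else if n % 2 = 1 then 1 else 2 := by
  induction n with
  | zero => simpa using SG_nil
  | succ n ih =>
    rw [SG_ne_nil (by simp), leftCol_rep1, topRow_rep, SG_nil, ih]
    by_cases h0 : n = 0
    · subst h0; norm_num [mexs0]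
    · by_cases h1 : n % 2 = 1
      · rw [if_neg h0, if_pos h1, if_neg (Nat.succ_ne_zero n), if_neg (by omega), mex01]
      · rw [if_neg h0, if_neg h1, if_neg (Nat.succ_ne_zero n), if_pos (by omega), mex02]

lemma col2 (n : ℕ) :
    SG (List.replicate n 2) = if n = 0 then 0 else if n % 2 = 1 then 2 else 0 := by
  induction n with
  | zero => simpa using SG_nil
  | succ n ih =>
    rw [SG_ne_nil (by simp),
      show leftCol (List.replicate (n+1) 2) = List.replicate (n+1) 1 from leftCol_rep2 (n+1) 0,
      topRow_rep, col1, ih]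
    by_cases h0 : n = 0
    · subst h0; norm_num [mex10]
    · by_cases h1 : n % 2 = 1
      · rw [if_neg (Nat.succ_ne_zero n), if_neg (by omega), if_neg h0, if_pos h1,
          if_neg (Nat.succ_ne_zero n), if_neg (by omega), mex22]
      · rw [if_neg (Nat.succ_ne_zero n), if_pos (by omega), if_neg h0, if_neg h1,
          if_neg (Nat.succ_ne_zero n), if_pos (by omega), mex10]

lemma col3 (n : ℕ) :
    SG (List.replicate n 3) = if n = 0 then 0 else if n = 1 then 1 else if n = 2 then 2
      else if n % 2 = 1 then 0 else 1 := by
  induction n with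
  | zero => simpa using SG_nil
  | succ n ih =>
    rw [SG_ne_nil (by simp),
      show leftCol (List.replicate (n+1) 3) = List.replicate (n+1) 2 from leftCol_rep2 (n+1) 1,
      topRow_rep, col2, ih]
    by_cases h0 : n = 0
    · subst h0; norm_num [mex20]
    by_cases h1 : n = 1
    · subst h1; norm_num [mex01]
    by_cases h2 : n = 2
    · subst h2; norm_num [mexs2]
    by_cases hp : n % 2 = 1
    · -- n ≥ 3 odd, n+1 even: mex {0, 0} = 1
      rw [if_neg (Nat.succ_ne_zero n), if_neg (by omega), if_neg h0, if_neg h1, if_neg h2,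
        if_pos hp, if_neg (Nat.succ_ne_zero n), if_neg (by omega), if_neg (by omega),
        if_neg (by omega), mex00]
    · rw [if_neg (Nat.succ_ne_zero n), if_pos (by omega), if_neg h0, if_neg h1, if_neg h2,
        if_neg hp, if_neg (Nat.succ_ne_zero n), if_neg (by omega), if_neg (by omega),
        if_pos (by omega), mex21]

lemma row1 (v : ℕ) :
    SG (List.replicate 1 v) = if v ≠ 0 ∧ v % 2 = 0 then 2 else 1 := by
  induction v with
  | zero =>
    rw [SG_ne_nil (by simp), leftCol_rep0, topRow_rep]
    simp only [List.replicate_zero, SG_nil]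
    norm_num [mexs0]
  | succ v ih =>
    match v, ih with
    | 0, _ =>
      rw [SG_ne_nil (by simp), leftCol_rep1, topRow_rep]
      simp only [List.replicate_zero, SG_nil]
      norm_num [mexs0]
    | w + 1, ih =>
      rw [SG_ne_nil (by simp), leftCol_rep2 1 w, topRow_rep]
      simp only [List.replicate_zero, SG_nil]
      rw [ih]
      by_cases hp : (w + 1) % 2 = 0
      · rw [if_pos ⟨Nat.succ_ne_zero w, hp⟩, if_neg (by omega), mex20]
      · rw [if_neg (by omega), if_pos (by constructor <;> omega), mex10]

lemma row2 (v : ℕ) :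
    SG (List.replicate 2 v) = if 2 ≤ v ∧ v % 2 = 0 then 0 else 2 := by
  induction v with
  | zero =>
    rw [SG_ne_nil (by simp), leftCol_rep0, topRow_rep, SG_nil, row1]
    norm_num [mex01]
  | succ v ih =>
    match v, ih with
    | 0, _ =>
      rw [SG_ne_nil (by simp), leftCol_rep1, topRow_rep, SG_nil, row1]
      norm_num [mex01]
    | w + 1, ih =>
      rw [SG_ne_nil (by simp), leftCol_rep2 2 w, topRow_rep, ih, row1]
      by_cases hp : (w + 1) % 2 = 0
      · -- w+1 even ≥ 2, so prev = 0?? w+1 even: ih-if: 2 ≤ w+1 ∧ even; w could be 1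
        by_cases h2 : 2 ≤ w + 1
        · rw [if_pos ⟨h2, hp⟩, if_neg (by omega), if_neg (by omega), mex01]
        · -- w = 0 impossible since w+1 even means w+1 ≥ 2
          omega
      · rw [if_neg (by omega), if_pos (by constructor <;> omega), if_pos (by constructor <;> omega),
          mex22]

lemma row3 (v : ℕ) :
    SG (List.replicate 3 v) = if v ≤ 1 then 1 else if v = 2 then 2
      else if v % 2 = 1 then 0 else 1 := by
  induction v with
  | zero =>
    rw [SG_ne_nil (by simp), leftCol_rep0, topRow_rep, SG_nil, row2]
    norm_num [mex02]
  | succ v ih =>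
    match v, ih with
    | 0, _ =>
      rw [SG_ne_nil (by simp), leftCol_rep1, topRow_rep, SG_nil, row2]
      norm_num [mex02]
    | w + 1, ih =>
      rw [SG_ne_nil (by simp), leftCol_rep2 3 w, topRow_rep, ih, row2]
      by_cases h1 : w = 0
      · subst h1; norm_num [mex10]
      by_cases h2 : w = 1
      · subst h2; norm_num [mexs2]
      by_cases hp : (w + 1) % 2 = 1
      · -- v = w+1 ≥ 3 odd, v+1 even: prev SG = 0, row2(v+1) = 0
        rw [if_neg (by omega), if_neg (by omega), if_pos hp, if_pos (by constructor <;> omega),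
          if_neg (by omega), if_neg (by omega), if_neg (by omega), mex00]
      · rw [if_neg (by omega), if_neg (by omega), if_neg hp, if_neg (by omega),
          if_neg (by omega), if_neg (by omega), if_pos (by omega), mex12]

/-- A partition: a non-increasing list of positive integers. -/
def IsPartition (l : List ℕ) : Prop := l.Pairwise (· ≥ ·) ∧ ∀ x ∈ l, 0 < x

/-- The conjugate partition: the `j`-th part (for `1 ≤ j ≤ l₁`) is the number
of parts of `l` that are at least `j`. -/
def conj (l : List ℕ) : List ℕ :=
  (List.range (l.headD 0)).map (fun j => l.countP (fun x => decide (j < x)))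

/-- For `n ≥ 3`, the partitions `(n³)` and `(3ⁿ)` have Sprague–Grundy value 0
if `n` is odd and 1 if `n` is even. -/
theorem SG_three_rows (n : ℕ) (hn : 3 ≤ n) :
    (Odd n → SG (List.replicate 3 n) = 0 ∧ SG (List.replicate n 3) = 0) ∧
    (Even n → SG (List.replicate 3 n) = 1 ∧ SG (List.replicate n 3) = 1) := by
  rw [row3, col3]
  constructor
  · intro h
    rw [Nat.odd_iff] at h
    constructor
    · rw [if_neg (by omega), if_neg (by omega), if_pos h]
    · rw [if_neg (by omega), if_neg (by omega), if_neg (by omega), if_pos h]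
  · intro h
    rw [Nat.even_iff] at h
    constructor
    · rw [if_neg (by omega), if_neg (by omega), if_neg (by omega)]
    · rw [if_neg (by omega), if_neg (by omega), if_neg (by omega), if_neg (by omega)]
end

section
/- Let n, r, s be positive integers with n > r. Then the partition (nʳ, rˢ), consisting of r parts equal to n followed by s parts equal to r, is a P-position in LCTR; that is, SG((nʳ, rˢ)) = 0. -/
lemma SG_unfold (l : List ℕ) (h : l ≠ []) :
    SG l = mex {SG (leftCol l), SG (topRow l)} := by
  rw [SG]; simp [h]

lemma mex_pair_eq_zero {x y : ℕ} (hx : x ≠ 0) (hy : y ≠ 0) : mex {x, y} = 0 := by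
  apply Nat.sInf_eq_zero.mpr
  left
  simp [Set.mem_insert_iff, hx.symm, hy.symm]

lemma mex_pair_ne_zero {x y : ℕ} (h : x = 0 ∨ y = 0) : mex {x, y} ≠ 0 := by
  intro h0
  rcases Nat.sInf_eq_zero.mp h0 with h1 | h1
  · simp only [Set.mem_setOf_eq, Set.mem_insert_iff, Set.mem_singleton_iff] at h1
    push_neg at h1
    rcases h with h | h <;> omega
  · have : x + y + 1 ∈ {n | n ∉ ({x, y} : Set ℕ)} := by
      simp only [Set.mem_setOf_eq, Set.mem_insert_iff, Set.mem_singleton_iff]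
      push_neg
      omega
    rw [h1] at this
    exact this

lemma SG_ne_zero_left {l : List ℕ} (h : l ≠ []) (h0 : SG (leftCol l) = 0) :
    SG l ≠ 0 := by
  rw [SG_unfold l h]; exact mex_pair_ne_zero (Or.inl h0)

lemma SG_ne_zero_top {l : List ℕ} (h : l ≠ []) (h0 : SG (topRow l) = 0) :
    SG l ≠ 0 := by
  rw [SG_unfold l h]; exact mex_pair_ne_zero (Or.inr h0)

lemma SG_eq_zero {l : List ℕ} (h : l ≠ []) (h1 : SG (leftCol l) ≠ 0)
    (h2 : SG (topRow l) ≠ 0) : SG l = 0 := by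
  rw [SG_unfold l h]; exact mex_pair_eq_zero h1 h2

lemma filter_pos_replicate (b n : ℕ) :
    (List.replicate b n).filter (0 < ·) = if 0 < n then List.replicate b n else [] := by
  induction b with
  | zero => simp
  | succ b ih =>
    rw [List.replicate_succ, List.filter_cons, ih]
    by_cases h : 0 < n <;> simp [h, List.replicate_succ]

lemma leftCol_rep_rep (a n b m : ℕ) :
    leftCol (List.replicate a n ++ List.replicate b m) =
      (if 0 < n - 1 then List.replicate a (n - 1) else []) ++
      (if 0 < m - 1 then List.replicate b (m - 1) else []) := by
  unfold leftCol
  rw [List.map_append, List.map_replicate, List.map_replicate, List.filter_append,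
    filter_pos_replicate, filter_pos_replicate]

lemma topRow_rep_rep (a n b m : ℕ) :
    topRow (List.replicate (a + 1) n ++ List.replicate b m) =
      List.replicate a n ++ List.replicate b m := by
  rw [List.replicate_succ]; rfl

lemma SG_single_ne_zero (k : ℕ) (hk : 0 < k) : SG [k] ≠ 0 := by
  apply SG_ne_zero_top (by simp)
  simp only [topRow, List.tail_cons]
  rw [SG]; simp

lemma SG_rep_one_ne_zero (b : ℕ) (hb : 0 < b) : SG (List.replicate b 1) ≠ 0 := by
  apply SG_ne_zero_left (by simp; try omega)
  have : leftCol (List.replicate b 1) = [] := by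
    unfold leftCol
    rw [List.map_replicate]
    simpa using filter_pos_replicate b (1 - 1)
  rw [this, SG]; simp

lemma SG_key : ∀ r n b : ℕ, 0 < r → r < n → 0 < b →
    SG (List.replicate r n ++ List.replicate b r) = 0 := by
  intro r
  induction r with
  | zero => omega
  | succ m ih =>
    intro n b _ hn hb
    rcases Nat.eq_zero_or_pos m with hm | hm
    · -- base case r = 1
      subst hm
      apply SG_eq_zero (by simp)
      · rw [leftCol_rep_rep]
        have h1 : 0 < n - 1 := by omega
        simp only [h1, if_true, Nat.sub_self, lt_irrefl, if_false, List.append_nil]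
        rw [List.replicate_one]
        exact SG_single_ne_zero (n - 1) h1
      · rw [topRow_rep_rep]
        simp only [List.replicate_zero, List.nil_append]
        exact SG_rep_one_ne_zero b hb
    · -- step: r = m + 1, m ≥ 1
      have hIH : SG (List.replicate m (n - 1) ++ List.replicate b m) = 0 :=
        ih (n - 1) b hm (by omega) hb
      apply SG_eq_zero (by simp; try omega)
      · -- left child: ((n-1)^(m+1), m^b); its top child is IH position
        rw [leftCol_rep_rep]
        have h1 : 0 < n - 1 := by omega
        have h2 : 0 < m + 1 - 1 := by omega
        simp only [h1, h2, if_true]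
        apply SG_ne_zero_top (by simp; try omega)
        rw [show m + 1 - 1 = m from rfl, topRow_rep_rep]
        exact hIH
      · -- top child: (n^m, (m+1)^b); its left child is IH position
        rw [topRow_rep_rep]
        apply SG_ne_zero_left (by simp; try omega)
        rw [leftCol_rep_rep]
        have h1 : 0 < n - 1 := by omega
        have h2 : 0 < m + 1 - 1 := by omega
        simp only [h1, h2, hm, if_true, show m + 1 - 1 = m from rfl]
        exact hIH

/-- For positive integers `n, r, s` with `n > r`, the partition `(nʳ, rˢ)` is
a P-position in LCTR. -/
theorem SG_diag (n r s : ℕ) (hr : 0 < r) (hs : 0 < s) (hrn : r < n) :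
    SG (List.replicate r n ++ List.replicate s r) = 0 :=
  SG_key r n s hr hrn hs
end
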